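/- Let R₁ = ℤ[X,Y]/(X², Y²) with x, y the images of X, Y, and let φ be a ring automorphism of R₁ that maps the additive subgroup generated by x and y onto itself (i.e., φ preserves degree two). Then φ maps the set {x, −x, y, −y} onto itself; in particular φ(x) and φ(y) each lie in {x, −x, y, −y}. -/

import Mathlib

open MvPolynomial

/-- The ideal (X², Y²) in ℤ[X,Y]. -/
noncomputable def I1 : Ideal (MvPolynomial (Fin 2) ℤ) :=
  Ideal.span {X 0 ^ 2, X 1 ^ 2}

/-- The ring R₁ = ℤ[X,Y]/(X², Y²), the integral cohomology ring of S² × S². -/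
abbrev R1 : Type := MvPolynomial (Fin 2) ℤ ⧸ I1

/-- The image x of X in R₁. -/
noncomputable def R1x : R1 := Ideal.Quotient.mk I1 (X 0)

/-- The image y of Y in R₁. -/
noncomputable def R1y : R1 := Ideal.Quotient.mk I1 (X 1)

set_option maxHeartbeats 1000000

lemma I1_coeff (m : Fin 2 →₀ ℕ) (hm0 : m 0 ≤ 1) (hm1 : m 1 ≤ 1) {p} (hp : p ∈ I1) :
    coeff m p = 0 := by
  rw [I1, Ideal.mem_span_pair] at hp
  obtain ⟨f, g, rfl⟩ := hp
  have h0 : coeff m (f * X 0 ^ 2) = 0 := by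
    rw [pow_two, ← mul_assoc, coeff_mul_X', coeff_mul_X']
    simp only [Finsupp.mem_support_iff]
    split_ifs with h1 h2 <;> try rfl
    exfalso; simp [Finsupp.sub_apply] at h2; omega
  have h1 : coeff m (g * X 1 ^ 2) = 0 := by
    rw [pow_two, ← mul_assoc, coeff_mul_X', coeff_mul_X']
    simp only [Finsupp.mem_support_iff]
    split_ifs with h1 h2 <;> try rfl
    exfalso; simp [Finsupp.sub_apply] at h2; omega
  simp [coeff_add, h0, h1]

lemma coeff_intCast_mul' (a : ℤ) (m : Fin 2 →₀ ℕ) (p : MvPolynomial (Fin 2) ℤ) :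
    coeff m ((a : MvPolynomial (Fin 2) ℤ) * p) = a * coeff m p := by
  rw [← eq_intCast (C : ℤ →+* MvPolynomial (Fin 2) ℤ) a, coeff_C_mul]

lemma R1_indep {a b : ℤ} (h : (a : R1) * R1x + (b : R1) * R1y = 0) : a = 0 ∧ b = 0 := by
  have hm : (Ideal.Quotient.mk I1) ((a : MvPolynomial (Fin 2) ℤ) * X 0 + (b : MvPolynomial (Fin 2) ℤ) * X 1) = 0 := by
    simpa [R1x, R1y] using h
  rw [Ideal.Quotient.eq_zero_iff_mem] at hm
  constructor
  · have := I1_coeff (Finsupp.single 0 1) (by simp) (by simp) hm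
    simpa [coeff_X', Finsupp.single_eq_single_iff, coeff_intCast_mul'] using this
  · have := I1_coeff (Finsupp.single 1 1) (by simp) (by simp) hm
    simpa [coeff_X', Finsupp.single_eq_single_iff, coeff_intCast_mul'] using this

lemma R1_tf {n : ℤ} (h : (n : R1) * (R1x * R1y) = 0) : n = 0 := by
  have hm : (Ideal.Quotient.mk I1) ((n : MvPolynomial (Fin 2) ℤ) * (X 0 * X 1)) = 0 := by
    simpa [R1x, R1y] using h
  rw [Ideal.Quotient.eq_zero_iff_mem] at hm
  have := I1_coeff (Finsupp.single 0 1 + Finsupp.single 1 1) (by simp) (by simp) hm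
  rw [coeff_intCast_mul', coeff_mul_X'] at this
  simp [coeff_X', Finsupp.single_eq_single_iff] at this
  exact this

lemma R1x_sq : R1x ^ 2 = 0 := by
  rw [R1x, ← map_pow, Ideal.Quotient.eq_zero_iff_mem, I1]
  exact Ideal.subset_span (by simp)

lemma R1y_sq : R1y ^ 2 = 0 := by
  rw [R1y, ← map_pow, Ideal.Quotient.eq_zero_iff_mem, I1]
  exact Ideal.subset_span (by simp)

lemma R1_mem_closure_iff (z : R1) :
    z ∈ AddSubgroup.closure ({R1x, R1y} : Set R1) ↔
      ∃ a b : ℤ, z = (a : R1) * R1x + (b : R1) * R1y := by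
  rw [AddSubgroup.mem_closure_pair]
  constructor
  · rintro ⟨m, n, rfl⟩
    exact ⟨m, n, by simp [zsmul_eq_mul]⟩
  · rintro ⟨a, b, rfl⟩
    exact ⟨a, b, by simp [zsmul_eq_mul]⟩

lemma sq_coeffs {a b : ℤ} (hφ : ∃ u : R1, u = (a : R1) * R1x + (b : R1) * R1y ∧ u ^ 2 = 0) :
    a = 0 ∨ b = 0 := by
  obtain ⟨u, rfl, hu⟩ := hφ
  have e : ((a : R1) * R1x + (b : R1) * R1y) ^ 2
      = ((2 * a * b : ℤ) : R1) * (R1x * R1y)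
        + (a : R1) ^ 2 * R1x ^ 2 + (b : R1) ^ 2 * R1y ^ 2 := by
    push_cast; ring
  rw [e, R1x_sq, R1y_sq] at hu
  simp only [mul_zero, add_zero] at hu
  have h2 := R1_tf hu
  rcases mul_eq_zero.mp h2 with h | h
  · left; rcases mul_eq_zero.mp h with h' | h' <;> omega
  · right; exact h

/-- Every ring automorphism of R₁ = ℤ[X,Y]/(X², Y²) which maps the additive subgroup generated
by x and y onto itself (i.e., preserves degree two) maps the set {x, −x, y, −y} onto itself;
in particular, the images of x and y lie in {x, −x, y, −y}. -/
theorem automorphism_R1_preserves (φ : R1 ≃+* R1)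
    (h : ⇑φ '' (AddSubgroup.closure ({R1x, R1y} : Set R1) : Set R1)
        = (AddSubgroup.closure ({R1x, R1y} : Set R1) : Set R1)) :
    ⇑φ '' ({R1x, -R1x, R1y, -R1y} : Set R1) = ({R1x, -R1x, R1y, -R1y} : Set R1) ∧
      φ R1x ∈ ({R1x, -R1x, R1y, -R1y} : Set R1) ∧
      φ R1y ∈ ({R1x, -R1x, R1y, -R1y} : Set R1) := by
  have hxcl : R1x ∈ AddSubgroup.closure ({R1x, R1y} : Set R1) :=
    AddSubgroup.subset_closure (by simp)
  have hycl : R1y ∈ AddSubgroup.closure ({R1x, R1y} : Set R1) :=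
    AddSubgroup.subset_closure (by simp)
  -- φ x and φ y lie in the closure
  obtain ⟨a, b, hφx⟩ := (R1_mem_closure_iff _).mp (h ▸ Set.mem_image_of_mem _ hxcl)
  obtain ⟨c, d, hφy⟩ := (R1_mem_closure_iff _).mp (h ▸ Set.mem_image_of_mem _ hycl)
  have hab : a = 0 ∨ b = 0 := sq_coeffs ⟨φ R1x, hφx, by rw [← map_pow, R1x_sq, map_zero]⟩
  have hcd : c = 0 ∨ d = 0 := sq_coeffs ⟨φ R1y, hφy, by rw [← map_pow, R1y_sq, map_zero]⟩
  -- surjectivity onto x and y gives determinant equations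
  obtain ⟨z1, hz1, hz1x⟩ : R1x ∈ ⇑φ '' (AddSubgroup.closure ({R1x, R1y} : Set R1) : Set R1) := by
    rw [h]; exact hxcl
  obtain ⟨z2, hz2, hz2y⟩ : R1y ∈ ⇑φ '' (AddSubgroup.closure ({R1x, R1y} : Set R1) : Set R1) := by
    rw [h]; exact hycl
  obtain ⟨p, q, rfl⟩ := (R1_mem_closure_iff _).mp hz1
  obtain ⟨p', q', rfl⟩ := (R1_mem_closure_iff _).mp hz2
  rw [map_add, map_mul, map_mul, map_intCast, map_intCast, hφx, hφy] at hz1x hz2y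
  have h0x : ((p * a + q * c - 1 : ℤ) : R1) * R1x + ((p * b + q * d : ℤ) : R1) * R1y = 0 := by
    push_cast
    push_cast at hz1x
    linear_combination hz1x
  have h0y : ((p' * a + q' * c : ℤ) : R1) * R1x + ((p' * b + q' * d - 1 : ℤ) : R1) * R1y = 0 := by
    push_cast
    push_cast at hz2y
    linear_combination hz2y
  obtain ⟨e1, e2⟩ := R1_indep h0x
  obtain ⟨e3, e4⟩ := R1_indep h0y
  have e1' : p * a + q * c = 1 := by omega
  have e4' : p' * b + q' * d = 1 := by omega
  have hdet : (a * d - b * c) * (p * q' - q * p') = 1 := by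
    calc (a * d - b * c) * (p * q' - q * p')
        = (p * a + q * c) * (p' * b + q' * d)
          - (p * b + q * d) * (p' * a + q' * c) := by ring
      _ = 1 := by rw [e1', e2, e3, e4']; ring
  have hdet' : a * d - b * c = 1 ∨ a * d - b * c = -1 :=
    Int.isUnit_iff.mp (IsUnit.of_mul_eq_one _ hdet)
  have key : ((φ R1x = R1x ∨ φ R1x = -R1x) ∧ (φ R1y = R1y ∨ φ R1y = -R1y)) ∨
      ((φ R1x = R1y ∨ φ R1x = -R1y) ∧ (φ R1y = R1x ∨ φ R1y = -R1x)) := by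
    rcases hab with ha0 | hb0
    · -- a = 0, so b, c = ±1, d = 0: the swap case
      right
      subst ha0
      simp only [zero_mul, zero_sub] at hdet'
      have hbc : b * c = 1 ∨ b * c = -1 := by
        rcases hdet' with h' | h'
        · right; linarith
        · left; linarith
      have hbu : IsUnit b := by
        rcases hbc with h' | h'
        · exact IsUnit.of_mul_eq_one _ h'
        · exact IsUnit.of_mul_eq_one (a := b) (-c) (by linarith)
      have hcu : IsUnit c := by
        rcases hbc with h' | h'
        · exact IsUnit.of_mul_eq_one (a := c) b (by linarith [mul_comm b c])
        · exact IsUnit.of_mul_eq_one (a := c) (-b) (by linarith [mul_comm b c])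
      have hb : b = 1 ∨ b = -1 := Int.isUnit_iff.mp hbu
      have hc : c = 1 ∨ c = -1 := Int.isUnit_iff.mp hcu
      have hc0 : c ≠ 0 := by rcases hc with rfl | rfl <;> omega
      have hd : d = 0 := hcd.resolve_left hc0
      constructor
      · rcases hb with rfl | rfl
        · left; rw [hφx]; push_cast; ring
        · right; rw [hφx]; push_cast; ring
      · rcases hc with rfl | rfl
        · left; rw [hφy, hd]; push_cast; ring
        · right; rw [hφy, hd]; push_cast; ring
    · -- b = 0, so a, d = ±1, c = 0: the diagonal case
      left
      subst hb0
      simp only [zero_mul, sub_zero] at hdet'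
      have had : a * d = 1 ∨ a * d = -1 := hdet'
      have hau : IsUnit a := by
        rcases had with h' | h'
        · exact IsUnit.of_mul_eq_one _ h'
        · exact IsUnit.of_mul_eq_one (a := a) (-d) (by linarith)
      have hdu : IsUnit d := by
        rcases had with h' | h'
        · exact IsUnit.of_mul_eq_one (a := d) a (by linarith [mul_comm a d])
        · exact IsUnit.of_mul_eq_one (a := d) (-a) (by linarith [mul_comm a d])
      have ha : a = 1 ∨ a = -1 := Int.isUnit_iff.mp hau
      have hd : d = 1 ∨ d = -1 := Int.isUnit_iff.mp hdu
      have hd0 : d ≠ 0 := by rcases hd with rfl | rfl <;> omega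
      have hc : c = 0 := hcd.resolve_right hd0
      constructor
      · rcases ha with rfl | rfl
        · left; rw [hφx]; push_cast; ring
        · right; rw [hφx]; push_cast; ring
      · rcases hd with rfl | rfl
        · left; rw [hφy, hc]; push_cast; ring
        · right; rw [hφy, hc]; push_cast; ring
  -- assemble the conclusion
  have hpair : ∀ u v : R1, u = v ∨ u = -v → ({u, -u} : Set R1) = {v, -v} := by
    rintro u v (rfl | rfl)
    · rfl
    · simp [Set.pair_comm]
  have hS : ({R1x, -R1x, R1y, -R1y} : Set R1) = {R1x, -R1x} ∪ ({R1y, -R1y} : Set R1) := by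
    ext z
    simp only [Set.mem_insert_iff, Set.mem_singleton_iff, Set.mem_union]
    exact or_assoc.symm
  refine ⟨?_, ?_, ?_⟩
  · rw [hS, Set.image_union, Set.image_pair, Set.image_pair, map_neg, map_neg]
    rcases key with ⟨k1, k2⟩ | ⟨k1, k2⟩
    · rw [hpair _ _ k1, hpair _ _ k2, ← hS]
    · rw [hpair _ _ k1, hpair _ _ k2, Set.union_comm, ← hS]
  · rcases key with ⟨k1, _⟩ | ⟨k1, _⟩ <;> rcases k1 with k | k <;> simp [k]
  · rcases key with ⟨_, k2⟩ | ⟨_, k2⟩ <;> rcases k2 with k | k <;> simp [k]
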